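/- Let A be a unital C*-algebra and x ∈ A with ‖x‖ ≤ 1. Then x is an extreme point of the closed unit ball of A if and only if x is a partial isometry (x = x x* x) satisfying (1 - x*x) a (1 - x x*) = 0 for all a ∈ A. -/

import Mathlib

set_option maxHeartbeats 2000000

section ExtremeAux
section ExtremeAux

variable {A : Type*} [CStarAlgebra A] [PartialOrder A] [StarOrderedRing A]

lemma auxExt_smul_nonneg {r : ℝ} (hr : 0 ≤ r) {d : A} (hd : 0 ≤ d) : 0 ≤ r • d := by
  have hb : IsSelfAdjoint (CFC.sqrt d) := IsSelfAdjoint.of_nonneg (CFC.sqrt_nonneg d)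
  have h1 : r • d = star (Real.sqrt r • CFC.sqrt d) * (Real.sqrt r • CFC.sqrt d) := by
    rw [star_smul, hb.star_eq, star_trivial, smul_mul_smul_comm, Real.mul_self_sqrt hr,
      CFC.sqrt_mul_sqrt_self d hd]
  rw [h1]; exact star_mul_self_nonneg _

lemma auxExt_star_mul_self_le_one {c : A} (h : ‖c‖ ≤ 1) : star c * c ≤ 1 := by
  rw [← CStarAlgebra.norm_le_one_iff_of_nonneg _ (star_mul_self_nonneg c),
    CStarRing.norm_star_mul_self]
  nlinarith [norm_nonneg c]

lemma auxExt_norm_le_one {c : A} (h : star c * c ≤ 1) : ‖c‖ ≤ 1 := by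
  have h2 := (CStarAlgebra.norm_le_one_iff_of_nonneg _ (star_mul_self_nonneg c)).mpr h
  rw [CStarRing.norm_star_mul_self] at h2
  nlinarith [norm_nonneg c]

lemma auxExt_halve {u v : A} (h : u + u ≤ v + v) : u ≤ v := by
  have h1 : (0:A) ≤ (v - u) + (v - u) := by
    rw [← sub_nonneg] at h; convert h using 1; abel
  have h2 : (0:A) ≤ (2⁻¹ : ℝ) • ((v - u) + (v - u)) := auxExt_smul_nonneg (by norm_num) h1
  have h3 : (2⁻¹ : ℝ) • ((v - u) + (v - u)) = v - u := by
    rw [← two_smul ℝ (v - u), smul_smul]; norm_num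
  rw [h3] at h2; exact sub_nonneg.mp h2

lemma auxExt_eq_zero_of_conj {a q : A} (hq : IsSelfAdjoint q) (hproj : q * q = q)
    (h : star a * a ≤ 1 - q) : a * q = 0 := by
  have h0 : 0 ≤ star (a * q) * (a * q) := star_mul_self_nonneg _
  have h1 : star (a * q) * (a * q) = q * (star a * a) * q := by
    rw [star_mul, hq.star_eq]; noncomm_ring
  have h2 := star_left_conjugate_le_conjugate h q
  rw [hq.star_eq] at h2
  have h3 : q * (1 - q) * q = 0 := by
    have : q * (1 - q) = 0 := by rw [mul_sub, mul_one, hproj, sub_self]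
    rw [this, zero_mul]
  have h4 : star (a * q) * (a * q) = 0 := le_antisymm (by rw [h1]; exact h3 ▸ h2) h0
  exact (CStarRing.star_mul_self_eq_zero_iff _).mp h4

lemma auxExt_proj {A : Type*} [CStarAlgebra A] [PartialOrder A] [StarOrderedRing A]
    (x : A) (hx : ‖x‖ ≤ 1)
    (hext : ∀ y z : A, ‖y‖ ≤ 1 → ‖z‖ ≤ 1 → x = (2⁻¹ : ℝ) • (y + z) → y = x ∧ z = x) :
    x * star x * x = x := by
  have hpsa : IsSelfAdjoint (star x * x) := IsSelfAdjoint.star_mul_self x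
  have hp0 : (0:A) ≤ star x * x := star_mul_self_nonneg x
  have hp1 : star x * x ≤ 1 := auxExt_star_mul_self_le_one hx
  have hspec : ∀ t ∈ spectrum ℝ (star x * x), 0 ≤ t ∧ t ≤ 1 := by
    intro t ht
    refine ⟨spectrum_nonneg_of_nonneg hp0 ht, ?_⟩
    exact (le_algebraMap_iff_spectrum_le (R := ℝ) (a := star x * x) hpsa).mp
      (by rw [map_one]; exact hp1) t ht
  have hgdef : ∃ g : A, g = cfc (fun t : ℝ => t * (1 - t) / 3) (star x * x) := ⟨_, rfl⟩
  obtain ⟨g, hg⟩ := hgdef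
  have hgsa : IsSelfAdjoint g := hg ▸ cfc_predicate _ _
  -- the two candidate elements
  have hplus : cfc (fun t : ℝ => (1 + t * (1 - t) / 3) * (t * (1 + t * (1 - t) / 3))) (star x * x)
      = (1 + g) * ((star x * x) * (1 + g)) := by
    rw [cfc_mul (fun t : ℝ => 1 + t * (1 - t) / 3) (fun t : ℝ => t * (1 + t * (1 - t) / 3))
        (star x * x) (by fun_prop) (by fun_prop),
      cfc_mul (fun t : ℝ => t) (fun t : ℝ => 1 + t * (1 - t) / 3) (star x * x)
        (by fun_prop) (by fun_prop),
      cfc_const_add (1:ℝ) (fun t : ℝ => t * (1 - t) / 3) (star x * x) (by fun_prop),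
      map_one, cfc_id' ℝ (star x * x), ← hg]
  have hminus : cfc (fun t : ℝ => (1 - t * (1 - t) / 3) * (t * (1 - t * (1 - t) / 3))) (star x * x)
      = (1 - g) * ((star x * x) * (1 - g)) := by
    have h1 : cfc (fun t : ℝ => 1 - t * (1 - t) / 3) (star x * x) = 1 - g := by
      rw [show (fun t : ℝ => 1 - t * (1 - t) / 3)
            = fun t : ℝ => (fun _ : ℝ => (1:ℝ)) t - (fun t : ℝ => t * (1 - t) / 3) t from rfl,
        cfc_sub (fun _ : ℝ => (1:ℝ)) (fun t : ℝ => t * (1 - t) / 3) (star x * x)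
          (by fun_prop) (by fun_prop),
        cfc_const (1:ℝ) (star x * x), map_one, hg]
    rw [cfc_mul (fun t : ℝ => 1 - t * (1 - t) / 3) (fun t : ℝ => t * (1 - t * (1 - t) / 3))
        (star x * x) (by fun_prop) (by fun_prop),
      cfc_mul (fun t : ℝ => t) (fun t : ℝ => 1 - t * (1 - t) / 3) (star x * x)
        (by fun_prop) (by fun_prop),
      h1, cfc_id' ℝ (star x * x)]
  -- norm bounds
  have hb1 : ‖x * (1 + g)‖ ≤ 1 := by
    refine auxExt_norm_le_one ?_
    have hsa : IsSelfAdjoint (1 + g) := (IsSelfAdjoint.one A).add hgsa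
    have heq : star (x * (1 + g)) * (x * (1 + g)) = (1 + g) * ((star x * x) * (1 + g)) := by
      rw [star_mul, hsa.star_eq]; noncomm_ring
    rw [heq, ← hplus]
    rw [← CStarAlgebra.norm_le_one_iff_of_nonneg _ (cfc_nonneg (fun t ht => by
      obtain ⟨h0, h1⟩ := hspec t ht
      have hf : 0 ≤ t * (1 - t) / 3 := by
        have := sub_nonneg.mpr h1; positivity
      nlinarith [sq_nonneg (1 + t * (1 - t) / 3)]))]
    refine norm_cfc_le zero_le_one fun t ht => ?_
    obtain ⟨h0, h1⟩ := hspec t ht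
    rw [Real.norm_eq_abs, abs_le]
    constructor <;> nlinarith [sq_nonneg (1 - t), sq_nonneg t,
      mul_nonneg h0 (sub_nonneg.mpr h1), mul_nonneg (mul_nonneg h0 h0) (sub_nonneg.mpr h1),
      sq_nonneg (t * (1 - t)), sq_nonneg (1 + t * (1 - t) / 3)]
  have hb2 : ‖x * (1 - g)‖ ≤ 1 := by
    refine auxExt_norm_le_one ?_
    have hsa : IsSelfAdjoint (1 - g) := (IsSelfAdjoint.one A).sub hgsa
    have heq : star (x * (1 - g)) * (x * (1 - g)) = (1 - g) * ((star x * x) * (1 - g)) := by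
      rw [star_mul, hsa.star_eq]; noncomm_ring
    rw [heq, ← hminus]
    rw [← CStarAlgebra.norm_le_one_iff_of_nonneg _ (cfc_nonneg (fun t ht => by
      obtain ⟨h0, h1⟩ := hspec t ht
      nlinarith [sq_nonneg (1 - t * (1 - t) / 3), mul_nonneg h0 (sub_nonneg.mpr h1)]))]
    refine norm_cfc_le zero_le_one fun t ht => ?_
    obtain ⟨h0, h1⟩ := hspec t ht
    rw [Real.norm_eq_abs, abs_le]
    constructor <;> nlinarith [sq_nonneg (1 - t), sq_nonneg t,
      mul_nonneg h0 (sub_nonneg.mpr h1), sq_nonneg (t * (1 - t)), sq_nonneg (1 - t * (1 - t) / 3)]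
  -- extremeness gives x * g = 0
  have hsum : x = (2⁻¹ : ℝ) • (x * (1 + g) + x * (1 - g)) := by
    have h2 : x * (1 + g) + x * (1 - g) = x + x := by noncomm_ring
    rw [h2, ← two_smul ℝ x, smul_smul]; norm_num
  obtain ⟨h5, -⟩ := hext _ _ hb1 hb2 hsum
  have hxg : x * g = 0 := by
    have h6 : x * (1 + g) = x + x * g := by noncomm_ring
    rw [h6] at h5
    exact add_eq_left.mp h5
  -- deduce spectrum condition
  have hzero : cfc (fun t : ℝ => (t * (1 - t) / 3) * (t * (t * (1 - t) / 3))) (star x * x) = 0 := by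
    have heq : cfc (fun t : ℝ => (t * (1 - t) / 3) * (t * (t * (1 - t) / 3))) (star x * x)
        = g * ((star x * x) * g) := by
      rw [cfc_mul (fun t : ℝ => t * (1 - t) / 3) (fun t : ℝ => t * (t * (1 - t) / 3))
          (star x * x) (by fun_prop) (by fun_prop),
        cfc_mul (fun t : ℝ => t) (fun t : ℝ => t * (1 - t) / 3) (star x * x)
          (by fun_prop) (by fun_prop),
        cfc_id' ℝ (star x * x), ← hg]
    have heq2 : g * ((star x * x) * g) = star (x * g) * (x * g) := by
      rw [star_mul, hgsa.star_eq]; noncomm_ring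
    rw [heq, heq2, hxg, mul_zero]
  have hspec0 : ∀ t ∈ spectrum ℝ (star x * x), t - t * t = 0 := by
    intro t ht
    have h7 := norm_apply_le_norm_cfc (fun t : ℝ => (t * (1 - t) / 3) * (t * (t * (1 - t) / 3)))
      (star x * x) ht (by fun_prop)
    rw [hzero, norm_zero] at h7
    have h8 : (t * (1 - t) / 3) * (t * (t * (1 - t) / 3)) = 0 :=
      norm_le_zero_iff.mp h7
    obtain ⟨h0, h1⟩ := hspec t ht
    have h9 : t^3 * (1 - t)^2 = 0 := by nlinarith [h8]
    rcases mul_eq_zero.mp h9 with h' | h'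
    · have : t = 0 := pow_eq_zero_iff (by norm_num) |>.mp h'
      simp [this]
    · have h10 : (1 - t) = 0 := pow_eq_zero_iff (by norm_num) |>.mp h'
      have : t = 1 := by linarith
      simp [this]
  -- conclude projection
  have hproj : (star x * x) * (star x * x) = star x * x := by
    have h11 : cfc (fun t : ℝ => t - t * t) (star x * x)
        = star x * x - (star x * x) * (star x * x) := by
      rw [show (fun t : ℝ => t - t * t)
            = fun t : ℝ => (fun t : ℝ => t) t - (fun t : ℝ => t * t) t from rfl,
        cfc_sub (fun t : ℝ => t) (fun t : ℝ => t * t) (star x * x) (by fun_prop) (by fun_prop),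
        cfc_mul (fun t : ℝ => t) (fun t : ℝ => t) (star x * x) (by fun_prop) (by fun_prop),
        cfc_id' ℝ (star x * x)]
    have h12 : ‖cfc (fun t : ℝ => t - t * t) (star x * x)‖ ≤ 0 :=
      norm_cfc_le le_rfl fun t ht => by rw [hspec0 t ht, norm_zero]
    have h13 := norm_le_zero_iff.mp h12
    rw [h11] at h13
    exact sub_eq_zero.mp h13 |>.symm
  -- conclude x * star x * x = x
  have hc : star (x - x * (star x * x)) * (x - x * (star x * x)) = 0 := by
    have expand : star (x - x * (star x * x)) * (x - x * (star x * x))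
        = star x * x - (star x * x) * (star x * x) - (star x * x) * (star x * x)
          + (star x * x) * ((star x * x) * (star x * x)) := by
      simp only [star_sub, star_mul, hpsa.star_eq]
      noncomm_ring
    rw [expand]
    simp only [hproj]
    abel
  have h14 := (CStarRing.star_mul_self_eq_zero_iff _).mp hc
  have h15 : x * (star x * x) = x := by
    rw [sub_eq_zero] at h14; exact h14.symm
  rw [← mul_assoc] at h15
  exact h15
lemma auxExt_ann {A : Type*} [CStarAlgebra A] [PartialOrder A] [StarOrderedRing A]
    (x : A) (hx : ‖x‖ ≤ 1) (hpi : x * star x * x = x)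
    (hext : ∀ y z : A, ‖y‖ ≤ 1 → ‖z‖ ≤ 1 → x = (2⁻¹ : ℝ) • (y + z) → y = x ∧ z = x)
    (a : A) : (1 - star x * x) * a * (1 - x * star x) = 0 := by
  have hpsa : IsSelfAdjoint (star x * x) := .star_mul_self x
  have hqsa : IsSelfAdjoint (x * star x) := .mul_star_self x
  have hp0 : (0:A) ≤ star x * x := star_mul_self_nonneg x
  have hq0 : (0:A) ≤ x * star x := mul_star_self_nonneg x
  have hp1 : star x * x ≤ 1 := auxExt_star_mul_self_le_one hx
  have hq1 : x * star x ≤ 1 := by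
    have := auxExt_star_mul_self_le_one (c := star x) (by rwa [norm_star])
    rwa [star_star] at this
  have hpproj : (star x * x) * (star x * x) = star x * x := by
    have h1 : (star x * x) * (star x * x) = star x * (x * star x * x) := by noncomm_ring
    rw [h1, hpi]
  have hstarq : star x * (x * star x) = star x := by
    have := congrArg star hpi
    simpa [star_mul, mul_assoc] using this
  have hxq : star x * (1 - x * star x) = 0 := by
    rw [mul_sub, mul_one, hstarq, sub_self]
  set s := (1 - x * star x) * star a * (1 - star x * x) with hs
  suffices hs0 : s = 0 by
    have h2 : (1 - star x * x) * a * (1 - x * star x) = star s := by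
      rw [hs]
      simp only [star_mul, star_sub, star_one, hpsa.star_eq, hqsa.star_eq, star_star]
      noncomm_ring
    rw [h2, hs0, star_zero]
  set c : ℝ := (1 + ‖a‖)⁻¹ with hc
  have hcpos : 0 < c := by rw [hc]; positivity
  set e := c • s with he
  have h1mp : ‖(1 : A) - star x * x‖ ≤ 1 := by
    rw [CStarAlgebra.norm_le_one_iff_of_nonneg _ (sub_nonneg.mpr hp1)]
    calc (1:A) - star x * x ≤ 1 - 0 := sub_le_sub_left hp0 1
      _ = 1 := sub_zero 1
  have h1mq : ‖(1 : A) - x * star x‖ ≤ 1 := by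
    rw [CStarAlgebra.norm_le_one_iff_of_nonneg _ (sub_nonneg.mpr hq1)]
    calc (1:A) - x * star x ≤ 1 - 0 := sub_le_sub_left hq0 1
      _ = 1 := sub_zero 1
  have hsnorm : ‖s‖ ≤ ‖a‖ := by
    have n1 := norm_mul_le ((1 - x * star x) * star a) (1 - star x * x)
    have n2 := norm_mul_le (1 - x * star x) (star a)
    rw [norm_star] at n2
    have m1 := norm_nonneg a
    have m2 := norm_nonneg ((1 - x * star x) * star a)
    have m3 := norm_nonneg ((1:A) - star x * x)
    have m4 := norm_nonneg ((1:A) - x * star x)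
    rw [hs]
    nlinarith [h1mp, h1mq]
  have henorm : ‖e‖ ≤ 1 := by
    rw [he, norm_smul, Real.norm_eq_abs, abs_of_pos hcpos, hc]
    have h3 : (1 + ‖a‖)⁻¹ * (1 + ‖a‖) = 1 := inv_mul_cancel₀ (by positivity)
    have h4 : (1 + ‖a‖)⁻¹ * ‖s‖ ≤ (1 + ‖a‖)⁻¹ * (1 + ‖a‖) := by
      apply mul_le_mul_of_nonneg_left _ (le_of_lt (by positivity))
      linarith
    linarith
  have hxe : star x * e = 0 := by
    rw [he, hs, mul_smul_comm]
    have h5 : star x * ((1 - x * star x) * star a * (1 - star x * x)) = 0 := by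
      rw [show star x * ((1 - x * star x) * star a * (1 - star x * x))
          = (star x * (1 - x * star x)) * star a * (1 - star x * x) by noncomm_ring, hxq,
        zero_mul, zero_mul]
    rw [h5, smul_zero]
  have hex : star e * x = 0 := by
    have := congrArg star hxe
    simpa [star_mul] using this
  have hprojp : ((1:A) - star x * x) * (1 - star x * x) = 1 - star x * x := by
    simp only [sub_mul, mul_sub, one_mul, mul_one, hpproj]
    abel
  have hsa1p : IsSelfAdjoint ((1:A) - star x * x) := (IsSelfAdjoint.one A).sub hpsa
  have he1p : e * (1 - star x * x) = e := by
    rw [he, hs, smul_mul_assoc]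
    congr 1
    rw [mul_assoc ((1 - x * star x) * star a), hprojp]
  have hee : star e * e ≤ 1 - star x * x := by
    have h1 : star e * e ≤ 1 := auxExt_star_mul_self_le_one henorm
    have h2 : star e * e = (1 - star x * x) * (star e * e) * (1 - star x * x) := by
      conv_lhs => rw [← he1p]
      rw [star_mul, hsa1p.star_eq]
      noncomm_ring
    have h3 := star_left_conjugate_le_conjugate h1 (1 - star x * x)
    rw [hsa1p.star_eq, mul_one, hprojp] at h3
    rw [h2]
    exact h3
  have hx1 : star (x + e) * (x + e) = star x * x + star e * e := by
    rw [star_add, add_mul, mul_add, mul_add, hxe, hex, add_zero, zero_add]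
  have hx2 : star (x - e) * (x - e) = star x * x + star e * e := by
    rw [star_sub, sub_mul, mul_sub, mul_sub, hxe, hex]
    abel
  have hple : star x * x + star e * e ≤ 1 := by
    have h4 := add_le_add_right hee (star x * x)
    have h5 : star x * x + ((1:A) - star x * x) = 1 := by abel
    rwa [h5] at h4
  have hb1 : ‖x + e‖ ≤ 1 := auxExt_norm_le_one (by rw [hx1]; exact hple)
  have hb2 : ‖x - e‖ ≤ 1 := auxExt_norm_le_one (by rw [hx2]; exact hple)
  have hsum : x = (2⁻¹ : ℝ) • ((x + e) + (x - e)) := by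
    have h6 : (x + e) + (x - e) = x + x := by abel
    rw [h6, ← two_smul ℝ x, smul_smul]
    norm_num
  obtain ⟨h7, -⟩ := hext _ _ hb1 hb2 hsum
  have he0 : e = 0 := add_eq_left.mp h7
  rw [he] at he0
  rcases smul_eq_zero.mp he0 with h8 | h8
  · exact absurd h8 (ne_of_gt hcpos)
  · exact h8

end ExtremeAux

/-- Characterization of linear extreme points of the closed unit ball of a unital
C*-algebra: `x` with `‖x‖ ≤ 1` is extreme iff `x` is a partial isometry with
`(1 - x*x) A (1 - xx*) = {0}`. -/
theorem extreme_point_iff_partialIsometry {A : Type*} [NormedRing A] [StarRing A]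
    [CStarRing A] [NormedAlgebra ℂ A] [CompleteSpace A] [StarModule ℂ A]
    (x : A) (hx : ‖x‖ ≤ 1) :
    (∀ y z : A, ‖y‖ ≤ 1 → ‖z‖ ≤ 1 → x = (2⁻¹ : ℝ) • (y + z) → y = x ∧ z = x) ↔
      (x * star x * x = x ∧ ∀ a : A, (1 - star x * x) * a * (1 - x * star x) = 0) := by
  letI : CStarAlgebra A := { ‹NormedRing A›, ‹StarRing A›, ‹CStarRing A›, ‹NormedAlgebra ℂ A›,
    ‹StarModule ℂ A›, ‹CompleteSpace A› with }
  letI : PartialOrder A := CStarAlgebra.spectralOrder A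
  letI : StarOrderedRing A := CStarAlgebra.spectralOrderedRing A
  constructor
  · intro hext
    have hpi := auxExt_proj x hx hext
    exact ⟨hpi, fun a => auxExt_ann x hx hpi hext a⟩
  · rintro ⟨hpi, hann⟩ y z hy hz hxyz
    have hpsa : IsSelfAdjoint (star x * x) := .star_mul_self x
    have hqsa : IsSelfAdjoint (x * star x) := .mul_star_self x
    have hpproj : (star x * x) * (star x * x) = star x * x := by
      have h1 : (star x * x) * (star x * x) = star x * (x * star x * x) := by noncomm_ring
      rw [h1, hpi]
    have hqproj : (x * star x) * (x * star x) = x * star x := by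
      have h1 : (x * star x) * (x * star x) = (x * star x * x) * star x := by noncomm_ring
      rw [h1, hpi]
    have hza : z = x + x - y := by
      have h2 : (2:ℝ) • x = y + z := by rw [hxyz, smul_smul]; norm_num
      rw [two_smul ℝ x] at h2
      exact eq_sub_of_add_eq' h2.symm
    set a := y - x with ha
    have hya : y = x + a := by rw [ha]; abel
    have hza2 : z = x - a := by rw [hza, ha]; abel
    have hy1 : star y * y ≤ 1 := auxExt_star_mul_self_le_one hy
    have hz1 : star z * z ≤ 1 := auxExt_star_mul_self_le_one hz
    have hy2 : y * star y ≤ 1 := by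
      have := auxExt_star_mul_self_le_one (c := star y) (by rwa [norm_star])
      rwa [star_star] at this
    have hz2 : z * star z ≤ 1 := by
      have := auxExt_star_mul_self_le_one (c := star z) (by rwa [norm_star])
      rwa [star_star] at this
    have hkey1 : star y * y + star z * z
        = (star x * x + star a * a) + (star x * x + star a * a) := by
      rw [hya, hza2]
      simp only [star_add, star_sub]
      noncomm_ring
    have hle1' : star a * a ≤ 1 - star x * x := by
      rw [le_sub_iff_add_le']
      apply auxExt_halve
      rw [← hkey1]
      exact add_le_add hy1 hz1
    have hle2' : a * star a ≤ 1 - x * star x := by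
      rw [le_sub_iff_add_le']
      apply auxExt_halve
      have hkey2 : y * star y + z * star z
          = (x * star x + a * star a) + (x * star x + a * star a) := by
        rw [hya, hza2]
        simp only [star_add, star_sub]
        noncomm_ring
      rw [← hkey2]
      exact add_le_add hy2 hz2
    have hap : a * (star x * x) = 0 := auxExt_eq_zero_of_conj hpsa hpproj hle1'
    have hsq : star a * (x * star x) = 0 := by
      apply auxExt_eq_zero_of_conj hqsa hqproj
      rwa [star_star]
    have hqa : (x * star x) * a = 0 := by
      have := congrArg star hsq
      simpa [star_mul, hqsa.star_eq] using this
    have e1 : a * (1 - star x * x) = a := by rw [mul_sub, mul_one, hap, sub_zero]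
    have e2 : (1 - x * star x) * a = a := by rw [sub_mul, one_mul, hqa, sub_zero]
    have hsa1p : IsSelfAdjoint ((1:A) - star x * x) := (IsSelfAdjoint.one A).sub hpsa
    have hsa1q : IsSelfAdjoint ((1:A) - x * star x) := (IsSelfAdjoint.one A).sub hqsa
    have f1 : (1 - star x * x) * star a = star a := by
      have := congrArg star e1
      rwa [star_mul, hsa1p.star_eq] at this
    have f2 : star a * (1 - x * star x) = star a := by
      have := congrArg star e2
      rwa [star_mul, hsa1q.star_eq] at this
    have h8 := hann (star a)
    rw [f1, f2] at h8
    have ha0 : a = 0 := star_eq_zero.mp h8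
    constructor
    · rw [hya, ha0, add_zero]
    · rw [hza2, ha0, sub_zero]
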